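/- arXiv:1803.01377 — 2 statements merged into one kernel-verified Lean document; each statement's English description precedes it below -/
import Mathlib

section
/- For the sequence wₙ = aba(ab)^{n+1}bab over A = {a, b}, the least submonoid S_w of A* satisfying the closure conditions (1) and (2) equals the submonoid generated by the single word ab, i.e., S_w = {(ab)^k : k ≥ 0}. -/
/-- Words over the two-letter alphabet `A = {a, b}` (the free monoid on `Bool`). -/
abbrev Word := FreeMonoid Bool

/-- The letter `a`. -/
def la : Word := FreeMonoid.of true

/-- The letter `b`. -/
def lb : Word := FreeMonoid.of false

/-- A submonoid `S` of `A*` satisfies the two closure conditions with respect to the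
sequence `w`: (1) if `wₙ = s v u v s'` with `s, s' ∈ S` then `v ∈ S`; and (2) if
`wₘ = s v t` and `wₙ = t' v s'` with `m ≠ n` and `s, s' ∈ S`, then `v ∈ S`. -/
def ClosedSw (w : ℕ → Word) (S : Submonoid Word) : Prop :=
  (∀ n v u s s', s ∈ S → s' ∈ S → w n = s * v * u * v * s' → v ∈ S) ∧
  (∀ m n v s s' t t', m ≠ n → s ∈ S → s' ∈ S → w m = s * v * t → w n = t' * v * s' →
    v ∈ S)

/-- The sequence `wₙ = a b a (a b)^(n+1) b a b`. -/
def wEx (n : ℕ) : Word := la * lb * la * (la * lb) ^ (n + 1) * lb * la * lb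

namespace Stmt18Aux

/-- list form of `(ab)^k` -/
def rep : ℕ → List Bool
  | 0 => []
  | n + 1 => true :: false :: rep n

/-- list form of `wEx n` -/
def wl (n : ℕ) : List Bool :=
  true :: false :: true :: true :: false :: (rep n ++ [false, true, false])

lemma rep_add (a b : ℕ) : rep (a + b) = rep a ++ rep b := by
  induction a with
  | zero => simp [rep]
  | succ a ih =>
    rw [Nat.succ_add]
    simp [rep, ih]

lemma rep_snoc (a : ℕ) : rep (a + 1) = rep a ++ [true, false] := by
  rw [rep_add]; rfl

/-- reverse-complement involution -/
def sig (l : List Bool) : List Bool := (l.map not).reverse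

lemma sig_append (a b : List Bool) : sig (a ++ b) = sig b ++ sig a := by
  simp [sig]

lemma sig_cons (x : Bool) (l : List Bool) : sig (x :: l) = sig l ++ [!x] := by
  simp [sig]

lemma sig_sig (l : List Bool) : sig (sig l) = l := by
  simp only [sig, List.map_reverse, List.reverse_reverse, List.map_map]
  have h : (not ∘ not) = id := by funext x; simp
  rw [h, List.map_id]

lemma sig_rep (k : ℕ) : sig (rep k) = rep k := by
  induction k with
  | zero => rfl
  | succ k ih =>
    show sig (true :: false :: rep k) = rep (k + 1)
    rw [sig_cons, sig_cons, ih, rep_snoc]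
    simp

lemma sig_wl (n : ℕ) : sig (wl n) = wl n := by
  have h : rep n ++ [true, false] = true :: false :: rep n := by
    have h1 := rep_add 1 n
    have h2 := rep_add n 1
    rw [Nat.add_comm] at h2
    rw [h2] at h1
    simpa [rep] using h1
  show sig (true :: false :: true :: true :: false :: (rep n ++ [false, true, false])) = _
  rw [sig_cons, sig_cons, sig_cons, sig_cons, sig_cons, sig_append, sig_rep]
  have h2 : sig [false, true, false] = [true, false, true] := rfl
  rw [h2]
  simp only [Bool.not_false, Bool.not_true]
  have key : rep n ++ [true, false, false, true, false] =
      true :: false :: (rep n ++ [false, true, false]) := by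
    have e : rep n ++ [true, false, false, true, false] =
        (rep n ++ [true, false]) ++ [false, true, false] := by simp
    rw [e, h]
    simp
  simp only [List.cons_append, List.nil_append, List.append_assoc]
  rw [key]
  simp [wl]

/-- count of adjacent `c c` pairs -/
def cnt (c : Bool) : List Bool → ℕ
  | [] => 0
  | [_] => 0
  | x :: y :: l => (if x = c ∧ y = c then 1 else 0) + cnt c (y :: l)

lemma cnt_cons_le (c x : Bool) (l : List Bool) : cnt c l ≤ cnt c (x :: l) := by
  cases l with
  | nil => simp [cnt]
  | cons y l => simp only [cnt]; exact Nat.le_add_left _ _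

lemma cnt_append_aux (c : Bool) : ∀ (N : ℕ) (l1 : List Bool), l1.length ≤ N →
    ∀ l2, cnt c l1 + cnt c l2 ≤ cnt c (l1 ++ l2) := by
  intro N
  induction N with
  | zero =>
    intro l1 h l2
    have : l1 = [] := List.length_eq_zero_iff.mp (Nat.le_zero.mp h)
    subst this
    simp [cnt]
  | succ N ih =>
    intro l1 h l2
    match l1 with
    | [] => simp [cnt]
    | [x] =>
      have := cnt_cons_le c x l2
      simpa [cnt] using this
    | x :: y :: l =>
      have hlen : (y :: l).length ≤ N := by simp at h ⊢; omega
      have := ih (y :: l) hlen l2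
      simp only [List.cons_append, cnt, List.append_eq] at *
      omega

lemma cnt_append (c : Bool) (l1 l2 : List Bool) :
    cnt c l1 + cnt c l2 ≤ cnt c (l1 ++ l2) :=
  cnt_append_aux c l1.length l1 le_rfl l2

lemma cnt_factor (c : Bool) (X Y : List Bool) : 1 ≤ cnt c (X ++ (c :: c :: Y)) := by
  have h1 := cnt_append c X (c :: c :: Y)
  have h2 : cnt c (c :: c :: Y) = 1 + cnt c (c :: Y) := by simp [cnt]
  omega

lemma notT (n : ℕ) : cnt true (false :: (rep n ++ [false, true, false])) = 0 := by
  induction n with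
  | zero => rfl
  | succ n ih =>
    show cnt true (false :: ((true :: false :: rep n) ++ [false, true, false])) = 0
    simp only [List.cons_append, cnt]
    simpa using ih

lemma notF (n : ℕ) : cnt false (false :: (rep n ++ [false, true, false])) = 1 := by
  induction n with
  | zero => rfl
  | succ n ih =>
    show cnt false (false :: ((true :: false :: rep n) ++ [false, true, false])) = 1
    simp only [List.cons_append, cnt]
    simpa using ih

lemma cntT_wl (n : ℕ) : cnt true (wl n) = 1 := by
  show cnt true (true :: false :: true :: true :: false :: (rep n ++ [false, true, false])) = 1
  simp only [cnt]
  rw [show (false :: (rep n ++ [false, true, false])) = (false :: (rep n ++ [false, true, false])) from rfl]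
  have := notT n
  simp [this, notT n]

lemma cntF_wl (n : ℕ) : cnt false (wl n) = 1 := by
  show cnt false (true :: false :: true :: true :: false :: (rep n ++ [false, true, false])) = 1
  simp [cnt, notF n]

lemma PB (n i : ℕ) (r : List Bool) (h : wl n = rep i ++ r) : i = 0 ∨ i = 1 := by
  match i with
  | 0 => exact Or.inl rfl
  | 1 => exact Or.inr rfl
  | (i + 2) => simp [wl, rep] at h

lemma headT (n i : ℕ) (v r : List Bool) (h : wl n = rep i ++ (v ++ r)) :
    v = [] ∨ ∃ v1, v = true :: v1 := by
  rcases PB n i _ h with rfl | rfl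
  · cases v with
    | nil => exact Or.inl rfl
    | cons c v1 =>
      simp only [rep, List.nil_append, wl, List.cons_append, List.cons.injEq] at h
      exact Or.inr ⟨v1, by rw [← h.1]⟩
  · cases v with
    | nil => exact Or.inl rfl
    | cons c v1 =>
      simp only [rep, wl, List.cons_append, List.nil_append, List.cons.injEq, true_and] at h
      exact Or.inr ⟨v1, by rw [← h.1]⟩

lemma repeq : ∀ (a b : ℕ) (X Y : List Bool),
    rep a ++ (false :: X) = rep b ++ (false :: Y) → a = b := by
  intro a
  induction a with
  | zero =>
    intro b X Y h
    cases b with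
    | zero => rfl
    | succ b => simp [rep] at h
  | succ a ih =>
    intro b X Y h
    cases b with
    | zero => simp [rep] at h
    | succ b =>
      simp only [rep, List.cons_append, List.cons.injEq, true_and] at h
      exact congrArg Nat.succ (ih b X Y h)

lemma uniq_tt (n : ℕ) (X Y : List Bool)
    (h : wl n = X ++ (true :: true :: Y)) :
    X = [true, false] ∧ Y = false :: (rep n ++ [false, true, false]) := by
  rcases X with _ | ⟨x, _ | ⟨y, _ | ⟨z, X'⟩⟩⟩
  · simp [wl] at h
  · simp [wl] at h
  · simp only [wl, List.cons_append, List.nil_append, List.cons.injEq] at h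
    obtain ⟨hx, hy, -, -, hY⟩ := h
    exact ⟨by rw [← hx, ← hy], hY.symm⟩
  · exfalso
    simp only [wl, List.cons_append, List.cons.injEq] at h
    obtain ⟨-, -, -, h4⟩ := h
    rcases X' with _ | ⟨x', X''⟩
    · simp at h4
    · simp only [List.cons_append, List.cons.injEq] at h4
      obtain ⟨-, h5⟩ := h4
      have h6 := cnt_factor true X'' Y
      rw [← h5, notT n] at h6
      omega

lemma ttcase (m n i j : ℕ) (p q t t' : List Bool) (hmn : m ≠ n)
    (h1 : wl m = rep i ++ ((p ++ (true :: true :: q)) ++ t))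
    (h2 : wl n = t' ++ ((p ++ (true :: true :: q)) ++ rep j)) : False := by
  obtain ⟨-, hq1⟩ := uniq_tt m (rep i ++ p) (q ++ t)
    (by rw [h1]; simp [List.append_assoc])
  obtain ⟨-, hq2⟩ := uniq_tt n (t' ++ p) (q ++ rep j)
    (by rw [h2]; simp [List.append_assoc])
  have hj : j = 0 ∨ j = 1 := by
    refine PB n j (sig (p ++ (true :: true :: q)) ++ sig t') ?_
    have hs := congrArg sig h2
    rw [sig_wl, sig_append, sig_append, sig_rep] at hs
    rw [hs, List.append_assoc]
  rcases hj with rfl | rfl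
  · simp only [rep, List.append_nil] at hq2
    subst hq2
    simp only [List.cons_append, List.append_assoc, List.cons.injEq, true_and] at hq1
    exact hmn (repeq n m _ _ hq1).symm
  · have hq : q = false :: (rep n ++ [false]) := by
      have : q ++ rep 1 = (false :: (rep n ++ [false])) ++ rep 1 := by
        rw [hq2]; simp [rep]
      exact List.append_cancel_right this
    subst hq
    simp only [List.cons_append, List.append_assoc, List.cons.injEq, true_and] at hq1
    exact hmn (repeq n m _ _ hq1).symm

lemma hasPair (c : Bool) (v : List Bool) :
    (∃ p q, v = p ++ (c :: c :: q)) ∨ cnt c v = 0 := by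
  induction v with
  | nil => right; rfl
  | cons x v ih =>
    rcases ih with ⟨p, q, rfl⟩ | h0
    · left; exact ⟨x :: p, q, rfl⟩
    · cases v with
      | nil => right; rfl
      | cons y v' =>
        by_cases hxy : x = c ∧ y = c
        · left; exact ⟨[], v', by simp [hxy.1, hxy.2]⟩
        · right; simp only [cnt, if_neg hxy]; simpa using h0

lemma lastF (v : List Bool) (h : sig v = [] ∨ ∃ u1, sig v = true :: u1) :
    v = [] ∨ ∃ v2, v = v2 ++ [false] := by
  rcases h with h | ⟨u1, h⟩
  · left
    have := congrArg sig h
    rwa [sig_sig] at this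
  · right
    refine ⟨sig u1, ?_⟩
    have := congrArg sig h
    rw [sig_sig, sig_cons] at this
    simpa using this

lemma repOf : ∀ (N : ℕ) (v : List Bool), v.length ≤ N →
    cnt true v = 0 → cnt false v = 0 →
    (v = [] ∨ ∃ v1, v = true :: v1) →
    (v = [] ∨ ∃ v2, v = v2 ++ [false]) → ∃ k, v = rep k := by
  intro N
  induction N with
  | zero =>
    intro v hlen _ _ _ _
    have : v = [] := List.length_eq_zero_iff.mp (Nat.le_zero.mp hlen)
    exact ⟨0, by simp [this, rep]⟩
  | succ N ih =>
    intro v hlen c1 c2 hh hl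
    rcases hh with rfl | ⟨v1, rfl⟩
    · exact ⟨0, rfl⟩
    rcases hl with h | ⟨v2, hv2⟩
    · simp at h
    cases v1 with
    | nil =>
      exfalso
      rcases v2 with _ | ⟨a, v2⟩ <;> simp at hv2
    | cons y v1' =>
      have hy : y = false := by
        cases y
        · rfl
        · exfalso; simp [cnt] at c1
      subst hy
      cases v1' with
      | nil => exact ⟨1, rfl⟩
      | cons z rest =>
        have hz : z = true := by
          cases z
          · exfalso; simp [cnt] at c2
          · rfl
        subst hz
        have c1' : cnt true (true :: rest) = 0 := by
          simp only [cnt] at c1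
          omega
        have c2' : cnt false (true :: rest) = 0 := by
          simp only [cnt] at c2
          omega
        have hlast : ∃ v2', true :: rest = v2' ++ [false] := by
          rcases v2 with _ | ⟨a, _ | ⟨b, v2'⟩⟩
          · simp at hv2
          · simp at hv2
          · refine ⟨v2', ?_⟩
            simp only [List.cons_append, List.cons.injEq] at hv2
            exact hv2.2.2
        obtain ⟨k, hk⟩ := ih (true :: rest) (by simp at hlen ⊢; omega) c1' c2'
          (Or.inr ⟨rest, rfl⟩) (Or.inr hlast)
        exact ⟨k + 1, by rw [show rep (k+1) = true :: false :: rep k from rfl, ← hk]⟩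

lemma cond1 (n i j : ℕ) (v u : List Bool)
    (h : wl n = rep i ++ (v ++ (u ++ (v ++ rep j)))) : ∃ k, v = rep k := by
  have key : ∀ c : Bool, cnt c v + cnt c v ≤ cnt c (wl n) := by
    intro c
    have h1 := cnt_append c (rep i) (v ++ (u ++ (v ++ rep j)))
    have h2 := cnt_append c v (u ++ (v ++ rep j))
    have h3 := cnt_append c u (v ++ rep j)
    have h4 := cnt_append c v (rep j)
    rw [← h] at h1
    omega
  have ct : cnt true v = 0 := by
    have := key true; rw [cntT_wl] at this; omega
  have cf : cnt false v = 0 := by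
    have := key false; rw [cntF_wl] at this; omega
  have hh := headT n i v _ h
  have h2' : wl n = rep j ++ (sig v ++ (sig u ++ (sig v ++ rep i))) := by
    have hs := congrArg sig h
    rw [sig_wl, sig_append, sig_append, sig_append, sig_append, sig_rep, sig_rep] at hs
    rw [hs]
    simp [List.append_assoc]
  have hl := headT n j (sig v) _ h2'
  exact repOf v.length v le_rfl ct cf hh (lastF v hl)

lemma cond2 (m n : ℕ) (hmn : m ≠ n) (i j : ℕ) (v t t' : List Bool)
    (h1 : wl m = rep i ++ (v ++ t)) (h2 : wl n = t' ++ (v ++ rep j)) :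
    ∃ k, v = rep k := by
  rcases hasPair true v with ⟨p, q, rfl⟩ | cT
  · exact absurd h2 (fun h2 => ttcase m n i j p q t t' hmn h1 h2)
  rcases hasPair false v with ⟨p, q, rfl⟩ | cF
  · exfalso
    have hs1 := congrArg sig h1
    rw [sig_wl, sig_append, sig_append, sig_rep] at hs1
    have hs2 := congrArg sig h2
    rw [sig_wl, sig_append, sig_append, sig_rep] at hs2
    refine ttcase n m j i (sig q) (sig p) (sig t') (sig t) (Ne.symm hmn) ?_ ?_
    · rw [hs2]
      rw [sig_append, sig_cons, sig_cons]
      simp [List.append_assoc]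
    · rw [hs1]
      rw [sig_append, sig_cons, sig_cons]
      simp [List.append_assoc]
  have hh := headT m i v _ h1
  have h2' : wl n = rep j ++ (sig v ++ sig t') := by
    have hs := congrArg sig h2
    rw [sig_wl, sig_append, sig_append, sig_rep] at hs
    rw [hs, List.append_assoc]
  have hl := headT n j (sig v) _ h2'
  exact repOf v.length v le_rfl cT cF hh (lastF v hl)

lemma toList_ab : FreeMonoid.toList (la * lb) = [true, false] := rfl

lemma toList_pow (k : ℕ) : FreeMonoid.toList ((la * lb) ^ k) = rep k := by
  induction k with
  | zero => rfl
  | succ k ih =>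
    rw [pow_succ, FreeMonoid.toList_mul, ih, toList_ab, rep_snoc]

lemma toList_wEx (n : ℕ) : FreeMonoid.toList (wEx n) = wl n := by
  show FreeMonoid.toList (la * lb * la * (la * lb) ^ (n + 1) * lb * la * lb) = _
  simp only [FreeMonoid.toList_mul, toList_pow]
  show [true] ++ [false] ++ [true] ++ rep (n + 1) ++ [false] ++ [true] ++ [false] = _
  rw [show rep (n + 1) = true :: false :: rep n from rfl]
  simp [wl]

end Stmt18Aux

open Stmt18Aux in
/-- For the sequence `wₙ = aba(ab)^(n+1)bab`, the least submonoid `S_w` satisfying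
the closure conditions is `{(ab)^k : k ≥ 0}`. -/
theorem stmt18 (Sw : Submonoid Word) (hcl : ClosedSw wEx Sw)
    (hleast : ∀ S : Submonoid Word, ClosedSw wEx S → Sw ≤ S) :
    (Sw : Set Word) = {x | ∃ k : ℕ, (la * lb) ^ k = x} := by
  have hM : ClosedSw wEx (Submonoid.powers (la * lb)) := by
    constructor
    · intro n v u s s' hs hs' heq
      obtain ⟨i, rfl⟩ := (Submonoid.mem_powers_iff s (la * lb)).mp hs
      obtain ⟨j, rfl⟩ := (Submonoid.mem_powers_iff s' (la * lb)).mp hs'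
      have hl : wl n = rep i ++ (FreeMonoid.toList v ++ (FreeMonoid.toList u ++
          (FreeMonoid.toList v ++ rep j))) := by
        have := congrArg FreeMonoid.toList heq
        rw [toList_wEx] at this
        simpa [FreeMonoid.toList_mul, toList_pow, List.append_assoc] using this
      obtain ⟨k, hk⟩ := cond1 n i j _ _ hl
      exact (Submonoid.mem_powers_iff v (la * lb)).mpr
        ⟨k, FreeMonoid.toList.injective (by rw [toList_pow, hk])⟩
    · intro m n v s s' t t' hmn hs hs' he1 he2
      obtain ⟨i, rfl⟩ := (Submonoid.mem_powers_iff s (la * lb)).mp hs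
      obtain ⟨j, rfl⟩ := (Submonoid.mem_powers_iff s' (la * lb)).mp hs'
      have hl1 : wl m = rep i ++ (FreeMonoid.toList v ++ FreeMonoid.toList t) := by
        have := congrArg FreeMonoid.toList he1
        rw [toList_wEx] at this
        simpa [FreeMonoid.toList_mul, toList_pow, List.append_assoc] using this
      have hl2 : wl n = FreeMonoid.toList t' ++ (FreeMonoid.toList v ++ rep j) := by
        have := congrArg FreeMonoid.toList he2
        rw [toList_wEx] at this
        simpa [FreeMonoid.toList_mul, toList_pow, List.append_assoc] using this
      obtain ⟨k, hk⟩ := cond2 m n hmn i j _ _ _ hl1 hl2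
      exact (Submonoid.mem_powers_iff v (la * lb)).mpr
        ⟨k, FreeMonoid.toList.injective (by rw [toList_pow, hk])⟩
  ext x
  simp only [SetLike.mem_coe, Set.mem_setOf_eq]
  constructor
  · intro hx
    exact (Submonoid.mem_powers_iff x (la * lb)).mp (hleast _ hM hx)
  · rintro ⟨k, rfl⟩
    have hab : la * lb ∈ Sw := by
      refine hcl.2 0 1 (la * lb) 1 1 (la * ((la * lb) ^ 1 * (lb * (la * lb))))
        (la * lb * la * ((la * lb) ^ 2 * lb)) (by omega) (one_mem _) (one_mem _) ?_ ?_
      · apply FreeMonoid.toList.injective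
        simp [wEx, FreeMonoid.toList_mul, pow_succ, la, lb]
      · apply FreeMonoid.toList.injective
        simp [wEx, FreeMonoid.toList_mul, pow_succ, la, lb]
    exact pow_mem hab k
end

section
/- Let w = (w₁, w₂, …) be a sequence of words in {a,b}⁺ satisfying the two closure conditions defining S_w, and suppose a ∈ S_w. Then b ∈ S_w and hence S_w = A*. (Consequently, under the hypothesis of Theorem 3.2 that no wₙ factors as s t v with s t, t v ∈ S_w, neither a nor b belongs to S_w.) -/
/-- Either all letters of `l` are `c`, or `l` splits at the first non-`c` letter. -/
lemma first_split (c : Bool) : ∀ l : List Bool,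
    (∀ x ∈ l, x = c) ∨ ∃ l1 l2 : List Bool, l = l1 ++ (!c) :: l2 ∧ ∀ x ∈ l1, x = c := by
  intro l
  induction l with
  | nil => left; simp
  | cons x t ih =>
    by_cases hx : x = c
    · rcases ih with h | ⟨l1, l2, heq, hall⟩
      · left; intro y hy
        rcases List.mem_cons.1 hy with rfl | hy
        · exact hx
        · exact h y hy
      · right; exact ⟨x :: l1, l2, by rw [heq, hx]; simp,
          fun y hy => by rcases List.mem_cons.1 hy with rfl | hy; exact hx; exact hall y hy⟩
    · right
      have hx' : x = !c := by revert hx; cases x <;> cases c <;> simp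
      exact ⟨[], t, by simp [hx'], by simp⟩

lemma last_split (c : Bool) (l : List Bool) :
    (∀ x ∈ l, x = c) ∨ ∃ l1 l2 : List Bool, l = l1 ++ (!c) :: l2 ∧ ∀ x ∈ l2, x = c := by
  rcases first_split c l.reverse with h | ⟨l1, l2, heq, hall⟩
  · left; intro x hx; exact h x (List.mem_reverse.2 hx)
  · right
    refine ⟨l2.reverse, l1.reverse, ?_, fun x hx => hall x (List.mem_reverse.1 hx)⟩
    have := congrArg List.reverse heq
    simpa using this

lemma allc_mem {Sw : Submonoid Word} {c : Bool} (hc : FreeMonoid.of c ∈ Sw) :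
    ∀ l : List Bool, (∀ x ∈ l, x = c) → FreeMonoid.ofList l ∈ Sw := by
  intro l
  induction l with
  | nil => intro _; exact Sw.one_mem
  | cons x t ih =>
    intro h
    rw [FreeMonoid.ofList_cons]
    have hx : x = c := h x List.mem_cons_self
    exact Sw.mul_mem (hx ▸ hc) (ih fun y hy => h y (List.mem_cons_of_mem x hy))

lemma other_mem (w : ℕ → Word) (Sw : Submonoid Word) (hcl : ClosedSw w Sw)
    (hno : ∀ n s t v, w n = s * t * v → s * t ∈ Sw → t * v ∈ Sw → False)
    (c : Bool) (hc : FreeMonoid.of c ∈ Sw) : FreeMonoid.of (!c) ∈ Sw := by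
  have key : ∀ n, (∀ x ∈ FreeMonoid.toList (w n), x = c) → False := by
    intro n hall
    have hmem : w n ∈ Sw := allc_mem hc _ hall
    exact hno n (w n) 1 1 (by simp) (by simpa using hmem) (by simpa using Sw.one_mem)
  rcases first_split c (FreeMonoid.toList (w 0)) with h | ⟨l1, l2, heq, hall1⟩
  · exact absurd h (fun h => (key 0 h).elim)
  rcases last_split c (FreeMonoid.toList (w 1)) with h | ⟨m1, m2, heq', hall2⟩
  · exact (key 1 h).elim
  refine hcl.2 0 1 (FreeMonoid.of (!c)) (FreeMonoid.ofList l1) (FreeMonoid.ofList m2)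
    (FreeMonoid.ofList l2) (FreeMonoid.ofList m1) (by norm_num)
    (allc_mem hc _ hall1) (allc_mem hc _ hall2) ?_ ?_
  · have : w 0 = FreeMonoid.ofList (l1 ++ (!c) :: l2) := by
      rw [← heq, FreeMonoid.ofList_toList]
    rw [this]
    rw [FreeMonoid.ofList_append, FreeMonoid.ofList_cons, mul_assoc]
  · have : w 1 = FreeMonoid.ofList (m1 ++ (!c) :: m2) := by
      rw [← heq', FreeMonoid.ofList_toList]
    rw [this]
    rw [FreeMonoid.ofList_append, FreeMonoid.ofList_cons, mul_assoc]

lemma top_of_both {Sw : Submonoid Word} (ha : la ∈ Sw) (hb : lb ∈ Sw) : Sw = ⊤ := by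
  rw [eq_top_iff]
  intro x _
  rw [← FreeMonoid.ofList_toList x]
  induction FreeMonoid.toList x with
  | nil => exact Sw.one_mem
  | cons y t ih =>
    rw [FreeMonoid.ofList_cons]
    exact Sw.mul_mem (by cases y <;> assumption) ih

/-- If `a ∈ S_w` then `b ∈ S_w` and `S_w = A*`; consequently, under the hypothesis
of Theorem 3.2 that no `wₙ` factors as `s t v` with `s t, t v ∈ S_w`, neither `a`
nor `b` belongs to `S_w`. -/
theorem stmt19 (w : ℕ → Word) (hne : ∀ n, w n ≠ 1)
    (Sw : Submonoid Word) (hcl : ClosedSw w Sw)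
    (hleast : ∀ S : Submonoid Word, ClosedSw w S → Sw ≤ S)
    (hno : ∀ n s t v, w n = s * t * v → s * t ∈ Sw → t * v ∈ Sw → False) :
    (la ∈ Sw → lb ∈ Sw ∧ Sw = ⊤) ∧ la ∉ Sw ∧ lb ∉ Sw := by
  have hFa : la ∈ Sw → False := by
    intro ha
    have hb : lb ∈ Sw := other_mem w Sw hcl hno true ha
    have htop := top_of_both ha hb
    exact hno 0 (w 0) 1 1 (by simp) (by simp [htop]) (by simpa using Sw.one_mem)
  have hFb : lb ∈ Sw → False := by
    intro hb
    have ha : la ∈ Sw := other_mem w Sw hcl hno false hb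
    have htop := top_of_both ha hb
    exact hno 0 (w 0) 1 1 (by simp) (by simp [htop]) (by simpa using Sw.one_mem)
  exact ⟨fun ha => (hFa ha).elim, hFa, hFb⟩
end
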